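/- For every real number α and all vectors p, d ∈ ℝ⁴, the standard inner product of exp(−α•B)·p with exp((π/2 − α)•B)·d equals the standard inner product of p with B·d. Consequently, a point p lies on the plane B·d if and only if the transformed point exp(−α•B)·p lies on the plane whose coordinate vector is exp((π/2 − α)•B)·d, i.e. the canonical duality (represented by the identity matrix) maps the points of the transformed polyhedron to the planes of the transformed dual. -/

import Mathlib

open Matrix

/-- The null-polarity matrix used in Cremona's method. -/
def Bmat : Matrix (Fin 4) (Fin 4) ℝ :=
  !![0, -1, 0, 0;
     1,  0, 0, 0;
     0,  0, 0, -1;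
     0,  0, 1, 0]

lemma Bmat_sq : Bmat * Bmat = -1 := by
  ext i j
  fin_cases i <;> fin_cases j <;>
    simp [Bmat, Matrix.mul_apply, Fin.sum_univ_four, Matrix.one_apply,
      Matrix.vecHead, Matrix.vecTail]

lemma Bmat_transpose : Bmatᵀ = -Bmat := by
  ext i j
  fin_cases i <;> fin_cases j <;> simp [Bmat, Matrix.vecHead, Matrix.vecTail]

/-- The real algebra map `ℂ → Mat₄(ℝ)` sending `i` to `Bmat`. -/
noncomputable def phiB : ℂ →ₐ[ℝ] Matrix (Fin 4) (Fin 4) ℝ where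
  toFun z := z.re • (1 : Matrix (Fin 4) (Fin 4) ℝ) + z.im • Bmat
  map_one' := by simp
  map_mul' z w := by
    simp only [Complex.mul_re, Complex.mul_im, add_mul, mul_add, smul_mul_assoc,
      mul_smul_comm, one_mul, mul_one, Bmat_sq]
    module
  map_zero' := by simp
  map_add' z w := by
    simp only [Complex.add_re, Complex.add_im]
    module
  commutes' r := by
    simp [Algebra.algebraMap_eq_smul_one]

lemma phiB_continuous : Continuous phiB := by
  have : (phiB : ℂ → Matrix (Fin 4) (Fin 4) ℝ) =
      fun z => z.re • (1 : Matrix (Fin 4) (Fin 4) ℝ) + z.im • Bmat := rfl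
  rw [this]
  exact (Complex.continuous_re.smul continuous_const).add
    (Complex.continuous_im.smul continuous_const)

attribute [local instance] Matrix.linftyOpNormedRing Matrix.linftyOpNormedAlgebra

lemma exp_smul_Bmat (t : ℝ) :
    NormedSpace.exp (t • Bmat) =
      Real.cos t • (1 : Matrix (Fin 4) (Fin 4) ℝ) + Real.sin t • Bmat := by
  have h1 : t • Bmat = phiB ((t : ℂ) * Complex.I) := by
    simp [phiB]
  rw [h1]; refine (NormedSpace.map_exp (phiB : ℂ →ₐ[ℝ] Matrix (Fin 4) (Fin 4) ℝ) phiB_continuous _).symm.trans ?_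
  have h2 : NormedSpace.exp ((t : ℂ) * Complex.I) = Complex.exp ((t : ℂ) * Complex.I) := by
    rw [Complex.exp_eq_exp_ℂ]
  rw [h2]
  show (Complex.exp ((t : ℂ) * Complex.I)).re • _ +
      (Complex.exp ((t : ℂ) * Complex.I)).im • Bmat = _
  rw [Complex.exp_ofReal_mul_I_re, Complex.exp_ofReal_mul_I_im]

lemma exp_key (α : ℝ) :
    (NormedSpace.exp ((-α) • Bmat))ᵀ *
      NormedSpace.exp ((Real.pi / 2 - α) • Bmat) = Bmat := by
  have ht : ((-α) • Bmat)ᵀ = α • Bmat := by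
    rw [Matrix.transpose_smul, Bmat_transpose]; module
  rw [← Matrix.exp_transpose, ht,
    ← Matrix.exp_add_of_commute _ _
      (((Commute.refl Bmat).smul_left α).smul_right (Real.pi / 2 - α))]
  have : α • Bmat + (Real.pi / 2 - α) • Bmat = (Real.pi / 2) • Bmat := by module
  rw [this, exp_smul_Bmat, Real.cos_pi_div_two, Real.sin_pi_div_two]
  simp

lemma mulVec_dot (A C : Matrix (Fin 4) (Fin 4) ℝ) (p d : Fin 4 → ℝ) :
    (A *ᵥ p) ⬝ᵥ (C *ᵥ d) = p ⬝ᵥ ((Aᵀ * C) *ᵥ d) := by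
  rw [dotProduct_comm, Matrix.dotProduct_mulVec, ← Matrix.mulVec_transpose,
    dotProduct_comm, ← Matrix.mulVec_mulVec]

/-- For every real `α` and all `p, d ∈ ℝ⁴`, the standard inner product of
`exp (-α • B) * p` with `exp ((π/2 - α) • B) * d` equals that of `p` with `B * d`.
Consequently `p` is incident with the plane `B * d` iff the transformed point
`exp (-α • B) * p` is incident with the plane `exp ((π/2 - α) • B) * d`. -/
theorem exp_smul_Bmat_incidence (α : ℝ) (p d : Fin 4 → ℝ) :
    (NormedSpace.exp ((-α) • Bmat) *ᵥ p) ⬝ᵥ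
        (NormedSpace.exp ((Real.pi / 2 - α) • Bmat) *ᵥ d) = p ⬝ᵥ (Bmat *ᵥ d) ∧
      (p ⬝ᵥ (Bmat *ᵥ d) = 0 ↔
        (NormedSpace.exp ((-α) • Bmat) *ᵥ p) ⬝ᵥ
          (NormedSpace.exp ((Real.pi / 2 - α) • Bmat) *ᵥ d) = 0) := by
  have h : (NormedSpace.exp ((-α) • Bmat) *ᵥ p) ⬝ᵥ
      (NormedSpace.exp ((Real.pi / 2 - α) • Bmat) *ᵥ d) = p ⬝ᵥ (Bmat *ᵥ d) := by
    rw [mulVec_dot, exp_key]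
  exact ⟨h, by rw [h]⟩
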